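/- Let n ≥ 2, σ: E(K_{4n}) → {-1,1} with σ(E(K_{4n})) = 0, and suppose σ(M) ≠ 0 for every perfect matching M. If M is a perfect matching minimizing |σ(M)| with σ(M) > 0, then σ(M) = 2, so M contains exactly n+1 edges with label +1 and n−1 edges with label −1. -/

import Mathlib

open Finset

noncomputable def sumE {m : ℕ} (σ : Sym2 (Fin m) → ℤ) (S : Set (Sym2 (Fin m))) : ℤ :=
  ∑ e ∈ S.toFinite.toFinset, σ e

def Kc (m : ℕ) : SimpleGraph (Fin m) := ⊤

theorem sumE_eq_finset {m : ℕ} (σ : Sym2 (Fin m) → ℤ) (S : Set (Sym2 (Fin m)))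
    (t : Finset (Sym2 (Fin m))) (h : S = ↑t) : sumE σ S = ∑ e ∈ t, σ e := by
  unfold sumE
  apply Finset.sum_congr _ (fun _ _ => rfl)
  ext e
  simp [Set.Finite.mem_toFinset, h]

section inv
variable {m : ℕ}

def mOf (f : Fin m → Fin m) : (Kc m).Subgraph where
  verts := Set.univ
  Adj u v := u ≠ v ∧ (f u = v ∨ f v = u)
  adj_sub := fun h => h.1
  edge_vert := fun _ => trivial
  symm := by
    refine ⟨fun u v h => ?_⟩
    exact ⟨Ne.symm h.1, h.2.symm⟩

theorem mOf_pm (f : Fin m → Fin m) (hinv : ∀ v, f (f v) = v) (hfpf : ∀ v, f v ≠ v) :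
    (mOf f).IsPerfectMatching := by
  constructor
  · intro v _
    refine ⟨f v, ⟨(hfpf v).symm, Or.inl rfl⟩, ?_⟩
    rintro w ⟨hne, h | h⟩
    · exact h.symm
    · rw [← h, hinv]
  · intro v; trivial

theorem mOf_edgeSet (f : Fin m → Fin m) (hfpf : ∀ v, f v ≠ v) :
    (mOf f).edgeSet = ↑(Finset.univ.image (fun v => s(v, f v))) := by
  ext e
  induction e with
  | h u v =>
    simp only [SimpleGraph.Subgraph.mem_edgeSet, Finset.coe_image, Finset.coe_univ,
      Set.image_univ, Set.mem_range]
    constructor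
    · rintro ⟨hne, h | h⟩
      · exact ⟨u, by rw [h]⟩
      · exact ⟨v, by rw [h, Sym2.eq_swap]⟩
    · rintro ⟨w, hw⟩
      rw [Sym2.eq_iff] at hw
      rcases hw with ⟨h1, h2⟩ | ⟨h1, h2⟩
      · subst h1; subst h2; exact ⟨(hfpf _).symm, Or.inl rfl⟩
      · subst h1; subst h2; exact ⟨hfpf _, Or.inr rfl⟩

theorem mOf_fiber (f : Fin m → Fin m)
    (hinv : ∀ v, f (f v) = v) (hfpf : ∀ v, f v ≠ v) :
    ∀ b ∈ Finset.univ.image (fun v => s(v, f v)),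
      (univ.filter (fun a => s(a, f a) = b)).card = 2 := by
  intro b hb
  obtain ⟨w, -, rfl⟩ := Finset.mem_image.mp hb
  have hfil : univ.filter (fun a => s(a, f a) = s(w, f w)) = {w, f w} := by
    ext a
    simp only [mem_filter, mem_univ, true_and, mem_insert, mem_singleton, Sym2.eq_iff]
    constructor
    · rintro (⟨rfl, -⟩ | ⟨rfl, h2⟩)
      · exact Or.inl rfl
      · exact Or.inr rfl
    · rintro (rfl | rfl)
      · exact Or.inl ⟨rfl, rfl⟩
      · exact Or.inr ⟨rfl, hinv w⟩
  rw [hfil, Finset.card_insert_of_notMem (by simp [Ne.symm (hfpf w)]), card_singleton]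

theorem mOf_sum (σ : Sym2 (Fin m) → ℤ) (f : Fin m → Fin m)
    (hinv : ∀ v, f (f v) = v) (hfpf : ∀ v, f v ≠ v) :
    ∑ v : Fin m, σ s(v, f v) = 2 * sumE σ (mOf f).edgeSet := by
  rw [sumE_eq_finset σ _ _ (mOf_edgeSet f hfpf)]
  rw [Finset.sum_comp σ (fun v => s(v, f v))]
  rw [Finset.mul_sum]
  apply Finset.sum_congr rfl
  intro b hb
  rw [mOf_fiber f hinv hfpf b hb]
  simp [two_smul, two_mul]

theorem mOf_card (f : Fin m → Fin m) (hinv : ∀ v, f (f v) = v) (hfpf : ∀ v, f v ≠ v) :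
    2 * (Finset.univ.image (fun v => s(v, f v))).card = m := by
  have h1 := Finset.card_eq_sum_card_image (fun v => s(v, f v)) (univ : Finset (Fin m))
  rw [Finset.card_univ, Fintype.card_fin] at h1
  have h2 : ∑ b ∈ Finset.univ.image (fun v => s(v, f v)),
      (univ.filter (fun a => s(a, f a) = b)).card
      = ∑ _b ∈ Finset.univ.image (fun v => s(v, f v)), 2 :=
    Finset.sum_congr rfl (mOf_fiber f hinv hfpf)
  rw [h2, Finset.sum_const, smul_eq_mul, mul_comm] at h1
  exact h1.symm

theorem total_sum (σ : Sym2 (Fin m) → ℤ) :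
    ∑ x : Fin m, ∑ y ∈ univ.filter (fun y => y ≠ x), σ s(x, y)
      = 2 * sumE σ (Kc m).edgeSet := by
  set P := (univ ×ˢ univ).filter (fun p : Fin m × Fin m => p.2 ≠ p.1) with hPdef
  have hP : ∑ x : Fin m, ∑ y ∈ univ.filter (fun y => y ≠ x), σ s(x, y)
      = ∑ p ∈ P, σ s(p.1, p.2) := by
    rw [hPdef, Finset.sum_filter, Finset.sum_product]
    simp_rw [← Finset.sum_filter]
  rw [hP]
  rw [sumE_eq_finset σ _ (P.image (fun p => s(p.1, p.2))) ?side]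
  case side =>
    ext e
    induction e with
    | h u v =>
      simp only [Finset.coe_image, Set.mem_image, Finset.mem_coe, hPdef, Finset.mem_filter,
        Finset.mem_product, mem_univ, true_and]
      have hK : s(u,v) ∈ (Kc m).edgeSet ↔ u ≠ v := by
        simp [Kc]
      rw [hK]
      constructor
      · intro h
        exact ⟨(u, v), Ne.symm h, rfl⟩
      · rintro ⟨⟨a, c⟩, hac, he⟩
        rw [Sym2.eq_iff] at he
        rcases he with ⟨h1, h2⟩ | ⟨h1, h2⟩
        · subst h1; subst h2; exact fun h => hac h.symm
        · subst h1; subst h2; exact fun h => hac h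
  · rw [Finset.sum_comp σ (fun p : Fin m × Fin m => s(p.1, p.2)), Finset.mul_sum]
    apply Finset.sum_congr rfl
    intro b hb
    obtain ⟨⟨u, v⟩, hp, rfl⟩ := Finset.mem_image.mp hb
    have huv : v ≠ u := (Finset.mem_filter.mp hp).2
    have hfil : P.filter (fun a => s(a.1, a.2) = s(u, v)) = {(u, v), (v, u)} := by
      ext ⟨a, c⟩
      simp only [hPdef, Finset.mem_filter, Finset.mem_product, mem_univ, true_and,
        Finset.mem_insert, Finset.mem_singleton, Sym2.eq_iff, Prod.mk.injEq, and_true]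
      constructor
      · exact fun h => h.2
      · intro h
        refine ⟨?_, h⟩
        rcases h with ⟨h1, h2⟩ | ⟨h1, h2⟩ <;> subst h1 <;> subst h2
        · exact huv
        · exact huv.symm
    rw [hfil, Finset.card_insert_of_notMem
        (by simp [Prod.ext_iff]; exact fun h => absurd h.symm huv), card_singleton]
    simp [two_smul, two_mul]

theorem swap_sum (σ : Sym2 (Fin m) → ℤ) (f : Fin m → Fin m)
    (hinv : ∀ v, f (f v) = v) (hfpf : ∀ v, f v ≠ v) (x y : Fin m)
    (hyx : y ≠ x) (hyfx : y ≠ f x) :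
    ∑ v : Fin m, σ s(v, Equiv.swap x y (f (Equiv.swap x y v)))
      = (∑ v : Fin m, σ s(v, f v))
        + 2 * (σ s(y, f x) + σ s(x, f y) - σ s(x, f x) - σ s(y, f y)) := by
  have hfinj : Function.Injective f := by
    intro a b h
    have := congrArg f h
    rwa [hinv, hinv] at this
  have hxfx : x ≠ f x := (hfpf x).symm
  have hyfy : y ≠ f y := (hfpf y).symm
  have hxy : x ≠ y := hyx.symm
  have hfxy : f x ≠ y := fun h => hyfx h.symm
  have hxfy : x ≠ f y := fun h => hfxy (by rw [h, hinv])
  have hfxfy : f x ≠ f y := fun h => hxy (hfinj h)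
  have step1 : ∑ v : Fin m, σ s(v, Equiv.swap x y (f (Equiv.swap x y v)))
      = ∑ w : Fin m, σ s(Equiv.swap x y w, Equiv.swap x y (f w)) := by
    rw [← Equiv.sum_comp (Equiv.swap x y)
      (fun v => σ s(v, Equiv.swap x y (f (Equiv.swap x y v))))]
    apply Finset.sum_congr rfl
    intro w _
    simp [Equiv.swap_apply_self]
  rw [step1]
  have step2 : ∑ w : Fin m, σ s(Equiv.swap x y w, Equiv.swap x y (f w))
      - ∑ w : Fin m, σ s(w, f w)
      = ∑ w : Fin m, (σ s(Equiv.swap x y w, Equiv.swap x y (f w)) - σ s(w, f w)) := by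
    rw [Finset.sum_sub_distrib]
  have hK : ∑ w : Fin m, (σ s(Equiv.swap x y w, Equiv.swap x y (f w)) - σ s(w, f w))
      = ∑ w ∈ ({x, f x, y, f y} : Finset (Fin m)),
          (σ s(Equiv.swap x y w, Equiv.swap x y (f w)) - σ s(w, f w)) := by
    symm
    apply Finset.sum_subset (Finset.subset_univ _)
    intro w _ hw
    simp only [Finset.mem_insert, Finset.mem_singleton, not_or] at hw
    obtain ⟨h1, h2, h3, h4⟩ := hw
    have hw1 : Equiv.swap x y w = w := Equiv.swap_apply_of_ne_of_ne h1 h3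
    have hfw1 : Equiv.swap x y (f w) = f w := by
      apply Equiv.swap_apply_of_ne_of_ne
      · exact fun h => h2 (by rw [← h, hinv])
      · exact fun h => h4 (by rw [← h, hinv])
    rw [hw1, hfw1, sub_self]
  have hexp : ∑ w ∈ ({x, f x, y, f y} : Finset (Fin m)),
          (σ s(Equiv.swap x y w, Equiv.swap x y (f w)) - σ s(w, f w))
      = 2 * (σ s(y, f x) + σ s(x, f y) - σ s(x, f x) - σ s(y, f y)) := by
    rw [Finset.sum_insert (by simp [hxfx, hxy, hxfy]),
        Finset.sum_insert (by simp [hfxy, hfxfy]),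
        Finset.sum_insert (by simp [hyfy]),
        Finset.sum_singleton]
    rw [Equiv.swap_apply_left, Equiv.swap_apply_right, hinv y, hinv x,
      Equiv.swap_apply_left, Equiv.swap_apply_right,
      Equiv.swap_apply_of_ne_of_ne (Ne.symm hxfx) hfxy,
      Equiv.swap_apply_of_ne_of_ne (Ne.symm hxfy) (Ne.symm hyfy)]
    rw [Sym2.eq_swap (a := f x) (b := y), Sym2.eq_swap (a := f x) (b := x),
      Sym2.eq_swap (a := f y) (b := x), Sym2.eq_swap (a := f y) (b := y)]
    ring
  have := step2.trans (hK.trans hexp)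
  linarith [this]

theorem T_eq (σ : Sym2 (Fin m) → ℤ) (f : Fin m → Fin m)
    (hinv : ∀ v, f (f v) = v) (hfpf : ∀ v, f v ≠ v) (hm : 2 ≤ m) :
    ∑ x : Fin m, ∑ y ∈ univ \ {x, f x},
        (σ s(y, f x) + σ s(x, f y) - σ s(x, f x) - σ s(y, f y))
      = 2 * (∑ x : Fin m, ∑ y ∈ univ.filter (fun y => y ≠ x), σ s(x, y))
        - (2 * (m : ℤ) - 2) * ∑ v : Fin m, σ s(v, f v) := by
  set R : Fin m → ℤ := fun x => ∑ y ∈ univ.filter (fun y => y ≠ x), σ s(x, y) with hR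
  set S : ℤ := ∑ v : Fin m, σ s(v, f v) with hS
  have hfull : ∀ x : Fin m, ∑ z : Fin m, σ s(x, z) = R x + σ s(x, x) := by
    intro x
    rw [← Finset.sum_filter_add_sum_filter_not univ (fun z => z ≠ x) (fun z => σ s(x, z))]
    congr 1
    have : univ.filter (fun z : Fin m => ¬ z ≠ x) = {x} := by ext z; simp
    rw [this, Finset.sum_singleton]
  have hsd : ∀ (x : Fin m) (g : Fin m → ℤ), ∑ y ∈ univ \ {x, f x}, g y
      = (∑ y : Fin m, g y) - g x - g (f x) := by
    intro x g
    rw [Finset.sum_sdiff_eq_sub (Finset.subset_univ _),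
      Finset.sum_insert (by simp [(hfpf x).symm]), Finset.sum_singleton]
    ring
  have inner1 : ∀ x : Fin m, ∑ y ∈ univ \ {x, f x}, σ s(x, f y) = R x - σ s(x, f x) := by
    intro x
    rw [hsd x (fun y => σ s(x, f y))]
    have : ∑ y : Fin m, σ s(x, f y) = ∑ z : Fin m, σ s(x, z) :=
      Equiv.sum_comp (⟨f, f, hinv, hinv⟩ : Fin m ≃ Fin m) (fun z => σ s(x, z))
    rw [this, hfull x, hinv x]
    ring
  have inner2 : ∀ x : Fin m, ∑ y ∈ univ \ {x, f x}, σ s(y, f x) = R (f x) - σ s(x, f x) := by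
    intro x
    rw [hsd x (fun y => σ s(y, f x))]
    have h1 : ∑ y : Fin m, σ s(y, f x) = R (f x) + σ s(f x, f x) := by
      rw [← hfull (f x)]
      exact Finset.sum_congr rfl (fun y _ => by rw [Sym2.eq_swap])
    rw [h1]
    ring
  have inner4 : ∀ x : Fin m, ∑ y ∈ univ \ {x, f x}, σ s(y, f y)
      = S - σ s(x, f x) - σ s(x, f x) := by
    intro x
    rw [hsd x (fun y => σ s(y, f y)), hinv x, Sym2.eq_swap (a := f x) (b := x), ← hS]
  have inner3 : ∀ x : Fin m, ∑ y ∈ univ \ {x, f x}, σ s(x, f x)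
      = ((m : ℤ) - 2) * σ s(x, f x) := by
    intro x
    rw [Finset.sum_const]
    have : (univ \ ({x, f x} : Finset (Fin m))).card = m - 2 := by
      rw [Finset.card_sdiff_of_subset (Finset.subset_univ _), Finset.card_univ, Fintype.card_fin,
        Finset.card_insert_of_notMem (by simp [(hfpf x).symm]), Finset.card_singleton]
    rw [this, nsmul_eq_mul]
    push_cast [Nat.cast_sub hm]
    ring
  have hsplit : ∀ x : Fin m, ∑ y ∈ univ \ {x, f x},
        (σ s(y, f x) + σ s(x, f y) - σ s(x, f x) - σ s(y, f y))
      = (R (f x) - σ s(x, f x)) + (R x - σ s(x, f x))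
        - ((m : ℤ) - 2) * σ s(x, f x) - (S - σ s(x, f x) - σ s(x, f x)) := by
    intro x
    rw [← inner1 x, ← inner2 x, ← inner3 x, ← inner4 x]
    rw [Finset.sum_sub_distrib, Finset.sum_sub_distrib, Finset.sum_add_distrib]
  calc ∑ x : Fin m, ∑ y ∈ univ \ {x, f x},
        (σ s(y, f x) + σ s(x, f y) - σ s(x, f x) - σ s(y, f y))
      = ∑ x : Fin m, ((R (f x) - σ s(x, f x)) + (R x - σ s(x, f x))
        - ((m : ℤ) - 2) * σ s(x, f x) - (S - σ s(x, f x) - σ s(x, f x))) :=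
        Finset.sum_congr rfl (fun x _ => hsplit x)
    _ = (∑ x : Fin m, R (f x)) + (∑ x : Fin m, R x) - 2 * S - ((m : ℤ) - 2) * S
        - ((m : ℤ) * S - S - S) := by
        rw [Finset.sum_sub_distrib, Finset.sum_sub_distrib, Finset.sum_add_distrib,
          Finset.sum_sub_distrib, Finset.sum_sub_distrib, Finset.sum_sub_distrib,
          ← Finset.mul_sum, Finset.sum_sub_distrib, Finset.sum_const, Finset.card_univ,
          Fintype.card_fin, nsmul_eq_mul, ← hS]
        ring
    _ = 2 * (∑ x : Fin m, R x) - (2 * (m : ℤ) - 2) * S := by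
        have : ∑ x : Fin m, R (f x) = ∑ x : Fin m, R x :=
          Equiv.sum_comp (⟨f, f, hinv, hinv⟩ : Fin m ≃ Fin m) R
        rw [this]
        ring

end inv

theorem stmt6 (n : ℕ) (hn : 2 ≤ n) (σ : Sym2 (Fin (4*n)) → ℤ)
    (hσ : ∀ e ∈ (Kc (4*n)).edgeSet, σ e = 1 ∨ σ e = -1)
    (hsum : sumE σ (Kc (4*n)).edgeSet = 0)
    (hno : ∀ N : (Kc (4*n)).Subgraph, N.IsPerfectMatching → sumE σ N.edgeSet ≠ 0)
    (M : (Kc (4*n)).Subgraph) (hM : M.IsPerfectMatching)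
    (hmin : ∀ N : (Kc (4*n)).Subgraph, N.IsPerfectMatching →
      |sumE σ M.edgeSet| ≤ |sumE σ N.edgeSet|)
    (hpos : 0 < sumE σ M.edgeSet) :
    sumE σ M.edgeSet = 2 ∧
    {e ∈ M.edgeSet | σ e = 1}.ncard = n + 1 ∧
    {e ∈ M.edgeSet | σ e = -1}.ncard = n - 1 := by
  classical
  have hm2 : 2 ≤ 4 * n := by omega
  -- extract the involution underlying M
  have hex : ∀ v : Fin (4*n), ∃ w, M.Adj v w ∧ ∀ y, M.Adj v y → y = w := by
    intro v
    obtain ⟨w, hw, hu⟩ := hM.1 (hM.2 v)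
    exact ⟨w, hw, hu⟩
  choose f hadj huniq using hex
  have hfpf : ∀ v, f v ≠ v := by
    intro v h
    have h2 := M.adj_sub (hadj v)
    rw [h] at h2
    exact (Kc (4*n)).loopless.irrefl v h2
  have hinv : ∀ v, f (f v) = v := fun v => (huniq (f v) v (hadj v).symm).symm
  have hedge : M.edgeSet = (mOf f).edgeSet := by
    ext e
    induction e with
    | h u v =>
      simp only [SimpleGraph.Subgraph.mem_edgeSet]
      constructor
      · intro h
        exact ⟨(M.adj_sub h).ne, Or.inl (huniq u v h).symm⟩
      · rintro ⟨hne, h | h⟩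
        · rw [← h]; exact hadj u
        · rw [← h]; exact (hadj v).symm
  set s0 := sumE σ M.edgeSet with hs0def
  have hS : ∑ v : Fin (4*n), σ s(v, f v) = 2 * s0 := by
    rw [mOf_sum σ f hinv hfpf, ← hedge]
  set E_M := Finset.univ.image (fun v => s(v, f v)) with hEM
  have hedge2 : M.edgeSet = ↑E_M := hedge.trans (mOf_edgeSet f hfpf)
  have hs0 : s0 = ∑ e ∈ E_M, σ e := sumE_eq_finset σ _ _ hedge2
  have hcard : E_M.card = 2 * n := by
    have h := mOf_card f hinv hfpf
    rw [← hEM] at h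
    omega
  have hedgeK : ∀ e ∈ E_M, σ e = 1 ∨ σ e = -1 := by
    intro e he
    obtain ⟨v, -, rfl⟩ := Finset.mem_image.mp he
    exact hσ _ (by simp [Kc, SimpleGraph.mem_edgeSet]; exact (hfpf v).symm)
  -- step 1 : s0 ≤ 3
  have hle3 : s0 ≤ 3 := by
    by_contra hgt
    push_neg at hgt
    have h4 : 4 ≤ s0 := by omega
    have hRtot : ∑ x : Fin (4*n), ∑ y ∈ univ.filter (fun y => y ≠ x), σ s(x, y) = 0 := by
      rw [total_sum σ, hsum, mul_zero]
    have hT := T_eq σ f hinv hfpf hm2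
    rw [hRtot, hS] at hT
    have hm8 : (8 : ℤ) ≤ (4*n : ℕ) := by exact_mod_cast (by omega : 8 ≤ 4*n)
    have hTneg : ∑ x : Fin (4*n), ∑ y ∈ univ \ {x, f x},
        (σ s(y, f x) + σ s(x, f y) - σ s(x, f x) - σ s(y, f y)) < 0 := by
      rw [hT]
      nlinarith [hpos, hm8]
    obtain ⟨x, hx⟩ : ∃ x : Fin (4*n), ∑ y ∈ univ \ {x, f x},
        (σ s(y, f x) + σ s(x, f y) - σ s(x, f x) - σ s(y, f y)) < 0 := by
      by_contra hc
      push_neg at hc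
      exact absurd (Finset.sum_nonneg (fun x _ => hc x)) (not_le.mpr hTneg)
    obtain ⟨y, hymem, hDy⟩ : ∃ y ∈ univ \ ({x, f x} : Finset (Fin (4*n))),
        (σ s(y, f x) + σ s(x, f y) - σ s(x, f x) - σ s(y, f y)) < 0 := by
      by_contra hc
      push_neg at hc
      exact absurd (Finset.sum_nonneg (fun y hy => hc y hy)) (not_le.mpr hx)
    simp only [Finset.mem_sdiff, Finset.mem_univ, true_and, Finset.mem_insert,
      Finset.mem_singleton, not_or] at hymem
    obtain ⟨hy1, hy2⟩ := hymem
    -- the swapped matching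
    set g : Fin (4*n) → Fin (4*n) := fun v => Equiv.swap x y (f (Equiv.swap x y v)) with hg
    have hginv : ∀ v, g (g v) = v := by
      intro v
      simp [hg, Equiv.swap_apply_self, hinv]
    have hgfpf : ∀ v, g v ≠ v := by
      intro v h
      have h2 := congrArg (⇑(Equiv.swap x y)) h
      rw [hg] at h2
      simp only [Equiv.swap_apply_self] at h2
      exact hfpf _ h2
    have hswap := swap_sum σ f hinv hfpf x y hy1 hy2
    have hSg := mOf_sum σ g hginv hgfpf
    rw [hg] at hSg
    rw [hswap, hS] at hSg
    set s1 := sumE σ (mOf g).edgeSet with hs1def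
    set D : ℤ := σ s(y, f x) + σ s(x, f y) - σ s(x, f x) - σ s(y, f y) with hD
    have hs1 : s1 = s0 + D := by linarith
    -- bounds on D
    have hbound : ∀ a b : Fin (4*n), a ≠ b → -1 ≤ σ s(a, b) ∧ σ s(a, b) ≤ 1 := by
      intro a b hab
      rcases hσ s(a, b) (by simp [Kc, SimpleGraph.mem_edgeSet]; exact hab) with h | h <;>
        rw [h] <;> norm_num
    have hd1 := hbound y (f x) hy2
    have hxfy : x ≠ f y := by
      intro h
      apply hy2
      rw [h, hinv]
    have hd2 := hbound x (f y) hxfy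
    have hd3 := hbound x (f x) (hfpf x).symm
    have hd4 := hbound y (f y) (hfpf y).symm
    have hDge : -4 ≤ D := by rw [hD]; linarith [hd1.1, hd2.1, hd3.2, hd4.2]
    have hmin' := hmin (mOf g) (mOf_pm g hginv hgfpf)
    rw [← hs1def] at hmin'
    rw [abs_of_pos hpos, abs_of_nonneg (show (0:ℤ) ≤ s1 by omega)] at hmin'
    omega
  -- step 2 : counting
  set P := E_M.filter (fun e => σ e = 1) with hP
  set Q := E_M.filter (fun e => σ e = -1) with hQ
  have hQ' : Q = E_M.filter (fun e => ¬ σ e = 1) := by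
    apply Finset.filter_congr
    intro e he
    rcases hedgeK e he with h | h <;> simp [h]
  have hPQ : P.card + Q.card = 2 * n := by
    rw [hP, hQ', Finset.card_filter_add_card_filter_not, hcard]
  have hsplitsum : s0 = (P.card : ℤ) - (Q.card : ℤ) := by
    rw [hs0, ← Finset.sum_filter_add_sum_filter_not E_M (fun e => σ e = 1)]
    have h1 : ∑ e ∈ E_M.filter (fun e => σ e = 1), σ e = (P.card : ℤ) := by
      rw [Finset.sum_congr rfl (fun e he => (Finset.mem_filter.mp he).2), hP,
        Finset.sum_const, nsmul_eq_mul, mul_one]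
    have h2 : ∑ e ∈ E_M.filter (fun e => ¬ σ e = 1), σ e = -(Q.card : ℤ) := by
      rw [← hQ']
      rw [Finset.sum_congr rfl (fun e he => (Finset.mem_filter.mp he).2)]
      rw [Finset.sum_const, nsmul_eq_mul]
      ring
    rw [h1, h2]
    ring
  have hs02 : s0 = 2 := by omega
  have hPcard : P.card = n + 1 := by omega
  have hQcard : Q.card = n - 1 := by omega
  refine ⟨hs02, ?_, ?_⟩
  · have hset : {e ∈ M.edgeSet | σ e = 1} = ↑P := by
      rw [hedge2, hP]
      ext e
      simp
    rw [hset, Set.ncard_coe_finset, hPcard]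
  · have hset : {e ∈ M.edgeSet | σ e = -1} = ↑Q := by
      rw [hedge2, hQ]
      ext e
      simp
    rw [hset, Set.ncard_coe_finset, hQcard]
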